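/- Let N, s, c, c₁, c₂ be positive integers, let W_q, W_k ∈ ℝ^{c×c₁} and W_v ∈ ℝ^{c×c₂} be fixed weight matrices, and for a batch of matrices X₁,…,X_N ∈ ℝ^{s×c} let Stack(X₁,…,X_N) ∈ ℝ^{Ns×c} denote their vertical concatenation. Define the batch-aware attention operator A_batch(X_i; X₁,…,X_N) = (1/(Ns)) · ((X_i·W_q) · (Stack(X₁,…,X_N)·W_k)ᵀ) · (Stack(X₁,…,X_N)·W_v). Then A_batch is equivariant to spatial permutations of the queried instance: for every permutation π of {1,…,s} with permutation matrix P_π ∈ ℝ^{s×s}, every batch X₁,…,X_N, and every index i, replacing X_i by P_π·X_i (both as the query input and in the batch) gives A_batch(P_π·X_i; X₁,…,P_π·X_i,…,X_N) = P_π · A_batch(X_i; X₁,…,X_N). -/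

import Mathlib

open Matrix

/-- The permutation matrix of a permutation `π`, whose `i`-th row is the
standard basis vector `e_{π i}`. -/
noncomputable def permMatrix {n : Type*} [DecidableEq n] (π : Equiv.Perm n) :
    Matrix n n ℝ :=
  Matrix.of fun i j => if π i = j then (1 : ℝ) else 0

/-- The vertical concatenation `Stack(X₁,…,X_N)` of a batch of `N` matrices of
shape `s × c`, placing the rows of `X₁,…,X_N` in order (indexed by
`Fin N × Fin s`). -/
noncomputable def stackBatch {N s c : ℕ}
    (X : Fin N → Matrix (Fin s) (Fin c) ℝ) :
    Matrix (Fin N × Fin s) (Fin c) ℝ :=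
  Matrix.of fun p j => X p.1 p.2 j

/-- The batch-aware attention operator: the query comes from the instance `X i`
while key and value cover the whole batch, normalized by the total spatial size
`N·s`. -/
noncomputable def batchAttn {N s c c₁ c₂ : ℕ}
    (Wq Wk : Matrix (Fin c) (Fin c₁) ℝ) (Wv : Matrix (Fin c) (Fin c₂) ℝ)
    (X : Fin N → Matrix (Fin s) (Fin c) ℝ) (i : Fin N) :
    Matrix (Fin s) (Fin c₂) ℝ :=
  (((N : ℝ) * (s : ℝ))⁻¹) •
    (((X i * Wq) * (stackBatch X * Wk)ᵀ) * (stackBatch X * Wv))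

/-- Multiplying by a permutation matrix on the left permutes the rows. -/
lemma permMatrix_mul {n : Type*} [DecidableEq n] [Fintype n] {m : Type*}
    (π : Equiv.Perm n) (A : Matrix n m ℝ) :
    permMatrix π * A = A.submatrix π id := by
  ext a b
  simp [permMatrix, Matrix.mul_apply]

/-- Row-permuting both factors leaves `Aᵀ * B` unchanged. -/
lemma transpose_mul_submatrix {p n m : Type*} [Fintype p] (σ : Equiv.Perm p)
    (A : Matrix p n ℝ) (B : Matrix p m ℝ) :
    (A.submatrix σ id)ᵀ * (B.submatrix σ id) = Aᵀ * B := by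
  ext a b
  simp only [Matrix.mul_apply, Matrix.transpose_apply, Matrix.submatrix_apply, id]
  exact Equiv.sum_comp σ fun q => A q a * B q b

/-- Batch-aware attention is equivariant to spatial permutations of the queried
instance: replacing `X i` by `P_π · X i`, both as the query input and within
the batch, permutes the output by `P_π`. -/
theorem batchAttn_permutation_equivariant
    (N s c c₁ c₂ : ℕ) (hN : 0 < N) (hs : 0 < s) (hc : 0 < c)
    (hc₁ : 0 < c₁) (hc₂ : 0 < c₂)
    (Wq Wk : Matrix (Fin c) (Fin c₁) ℝ) (Wv : Matrix (Fin c) (Fin c₂) ℝ)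
    (X : Fin N → Matrix (Fin s) (Fin c) ℝ) (i : Fin N)
    (π : Equiv.Perm (Fin s)) :
    batchAttn Wq Wk Wv (Function.update X i (permMatrix π * X i)) i =
      permMatrix π * batchAttn Wq Wk Wv X i := by
  classical
  set Y := Function.update X i (permMatrix π * X i) with hY
  -- the induced permutation of the stacked batch
  set σ : Equiv.Perm (Fin N × Fin s) :=
    Equiv.prodCongrRight (fun j => if j = i then π else Equiv.refl _) with hσ
  have hstack : stackBatch Y = (stackBatch X).submatrix σ id := by
    ext ⟨j, t⟩ a
    by_cases hj : j = i
    · subst hj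
      simp [stackBatch, hY, hσ, Function.update_self, _root_.permMatrix_mul,
        Equiv.prodCongrRight]
    · simp [stackBatch, hY, hσ, Function.update_of_ne hj,
        Equiv.prodCongrRight, hj]
  have hKV : ∀ (d : ℕ) (W : Matrix (Fin c) (Fin d) ℝ),
      stackBatch Y * W = (stackBatch X * W).submatrix σ id := by
    intro d W
    rw [hstack]
    ext p a
    simp [Matrix.mul_apply]
  have hmid : (stackBatch Y * Wk)ᵀ * (stackBatch Y * Wv)
      = (stackBatch X * Wk)ᵀ * (stackBatch X * Wv) := by
    rw [hKV _ Wk, hKV _ Wv, transpose_mul_submatrix]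
  have hYi : Y i = permMatrix π * X i := Function.update_self ..
  unfold batchAttn
  rw [Matrix.mul_smul]
  congr 1
  calc Y i * Wq * (stackBatch Y * Wk)ᵀ * (stackBatch Y * Wv)
      = Y i * Wq * ((stackBatch Y * Wk)ᵀ * (stackBatch Y * Wv)) := by
        rw [Matrix.mul_assoc]
    _ = permMatrix π * X i * Wq * ((stackBatch X * Wk)ᵀ * (stackBatch X * Wv)) := by
        rw [hYi, hmid]
    _ = permMatrix π * (X i * Wq * (stackBatch X * Wk)ᵀ * (stackBatch X * Wv)) := by
        simp only [Matrix.mul_assoc]
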